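/- Any solution (U^n)_{n≥0} of the SFTR-1/2 Crank–Nicolson scheme satisfies the discrete compatible energy decay law ℰ^n − ℰ^{n−1} + (τ^α/2)·ϑ_{n−1}·‖V^{n−1/2}‖² ≤ 0 for every integer n ≥ 1; in particular ℰ^n ≤ ℰ^{n−1}. -/

import Mathlib

/-- The SFTR-1/2 weights `ω_m`. -/
noncomputable def sftrW (α : ℝ) : ℕ → ℝ
  | 0 => (2 * α / (α + 1)) ^ α
  | 1 => -α * (2 * α / (α + 1)) ^ (α + 1)
  | (m + 2) =>
      2 * α / (((m : ℝ) + 2) * (α + 1)) *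
        (((((m : ℝ) + 2) - 1) / α - α) * sftrW α (m + 1) +
          (α - 1) / (2 * α) * (((m : ℝ) + 2) - 2) * sftrW α m)

/-- The sequence `θ_m`. -/
noncomputable def seqTheta (α : ℝ) : ℕ → ℝ
  | 0 => ((α + 1) / (2 * α)) ^ α
  | 1 => (α - 1) * (2 * α + 1) / (α + 1) * seqTheta α 0
  | (m + 2) =>
      2 * α / (((m : ℝ) + 2) * (1 + α)) *
        (((((m : ℝ) + 2) - 1) / α - (1 - α) / (2 * α) * (2 * α + 1)) * seqTheta α (m + 1) +
          (1 - α) / (2 * α) * (3 - ((m : ℝ) + 2)) * seqTheta α m)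

/-- The partial sums `ϑ_m = Σ_{s=0}^m θ_s`. -/
noncomputable def varTheta (α : ℝ) (m : ℕ) : ℝ := ∑ s ∈ Finset.range (m + 1), seqTheta α s

open Kronecker in
/-- The periodic second-difference matrix `D`. -/
noncomputable def matD (M : ℕ) : Matrix (Fin M) (Fin M) ℝ := fun i j =>
  if i = j then -2
  else if i.1 + 1 = j.1 ∨ j.1 + 1 = i.1 then 1
  else if (i.1 = 0 ∧ j.1 = M - 1) ∨ (j.1 = 0 ∧ i.1 = M - 1) then 1
  else 0

open Kronecker in
/-- The discrete Laplacian `Δ_h = h⁻²(I ⊗ D + D ⊗ I)`. -/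
noncomputable def lapMat (M : ℕ) (h : ℝ) : Matrix (Fin M × Fin M) (Fin M × Fin M) ℝ :=
  (h ^ 2)⁻¹ • ((1 : Matrix (Fin M) (Fin M) ℝ) ⊗ₖ matD M + matD M ⊗ₖ (1 : Matrix (Fin M) (Fin M) ℝ))

/-- The nonlinear term `f(W, U)`. -/
noncomputable def fnl {M : ℕ} (W U : Fin M × Fin M → ℝ) : Fin M × Fin M → ℝ := fun i =>
  1 / 3 * U i ^ 3 + 1 / 2 * W i ^ 2 * U i + 1 / 6 * W i ^ 3 - 1 / 2 * (U i + W i)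

/-- `(U^n)` solves the SFTR-1/2 Crank–Nicolson scheme. -/
def solvesScheme (α ε τ h : ℝ) (M : ℕ) (U : ℕ → (Fin M × Fin M → ℝ)) : Prop :=
  ∀ n : ℕ, 1 ≤ n →
    (τ ^ (-α)) • ∑ m ∈ Finset.range (n + 1), sftrW α m • (U (n - m) - U 0) =
      ε ^ 2 • (lapMat M h).mulVec ((1 / 2 : ℝ) • (U n + U (n - 1))) - fnl (U (n - 1)) (U n)

/-- The discrete L2 inner product (u,v) = h^2 * sum_i u_i v_i. -/
noncomputable def ipd {M : ℕ} (h : ℝ) (u v : Fin M × Fin M → ℝ) : ℝ :=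
  h ^ 2 * ∑ i, u i * v i

/-- The half-step variational derivative V^{s-1/2}. -/
noncomputable def Vhalf (ε h : ℝ) (M : ℕ) (U : ℕ → (Fin M × Fin M → ℝ)) (s : ℕ) :
    Fin M × Fin M → ℝ :=
  ε ^ 2 • (lapMat M h).mulVec ((1 / 2 : ℝ) • (U s + U (s - 1))) - fnl (U (s - 1)) (U s)

/-- The discrete energy E_h^n. -/
noncomputable def discE (ε h : ℝ) (M : ℕ) (U : ℕ → (Fin M × Fin M → ℝ)) (n : ℕ) : ℝ :=
  ε ^ 2 / 2 * ipd h (-(lapMat M h).mulVec (U n)) (U n) +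
    1 / 4 * ipd h (fun i => (U n i) ^ 2 - 1) (fun i => (U n i) ^ 2 - 1)

/-- The discrete compatible energy. -/
noncomputable def compE (α ε τ h : ℝ) (M : ℕ) (U : ℕ → (Fin M × Fin M → ℝ)) (n : ℕ) : ℝ :=
  if n = 0 then discE ε h M U 0
  else discE ε h M U n +
    τ ^ α / 2 * ∑ s ∈ Finset.Icc 1 n, varTheta α (n - s) * ipd h (Vhalf ε h M U s) (Vhalf ε h M U s)

section Aux
variable {α : ℝ}

lemma omega_rec (hα : α ∈ Set.Ioo (0:ℝ) 1) (k : ℕ) :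
    (α+1) * ((k:ℝ)+2) * sftrW α (k+2)
      = (2*((k:ℝ)+1) - 2*α^2) * sftrW α (k+1) + (α-1) * (k:ℝ) * sftrW α k := by
  obtain ⟨h0, h1⟩ := hα
  have hk : ((k:ℝ)+2) ≠ 0 := by positivity
  have ha : α ≠ 0 := ne_of_gt h0
  have ha1 : α + 1 ≠ 0 := by nlinarith
  show (α+1) * ((k:ℝ)+2) * (2 * α / (((k : ℝ) + 2) * (α + 1)) *
        (((((k : ℝ) + 2) - 1) / α - α) * sftrW α (k + 1) +
          (α - 1) / (2 * α) * (((k : ℝ) + 2) - 2) * sftrW α k)) = _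
  field_simp
  ring

lemma omega_rec1 (hα : α ∈ Set.Ioo (0:ℝ) 1) :
    (α+1) * sftrW α 1 = -(2*α^2) * sftrW α 0 := by
  obtain ⟨h0, h1⟩ := hα
  have hb : (0:ℝ) < 2 * α / (α + 1) := by positivity
  show (α+1) * (-α * (2 * α / (α + 1)) ^ (α + 1)) = -(2*α^2) * (2 * α / (α + 1)) ^ α
  rw [Real.rpow_add hb, Real.rpow_one]
  field_simp

lemma theta_rec (hα : α ∈ Set.Ioo (0:ℝ) 1) (k : ℕ) :
    (α+1) * ((k:ℝ)+2) * seqTheta α (k+2)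
      = (2*((k:ℝ)+1) - (1-α)*(2*α+1)) * seqTheta α (k+1) + (1-α) * (1-(k:ℝ)) * seqTheta α k := by
  obtain ⟨h0, h1⟩ := hα
  have hk : ((k:ℝ)+2) ≠ 0 := by positivity
  have ha : α ≠ 0 := ne_of_gt h0
  have ha1 : α + 1 ≠ 0 := by nlinarith
  show (α+1) * ((k:ℝ)+2) * (2 * α / (((k : ℝ) + 2) * (1 + α)) *
        (((((k : ℝ) + 2) - 1) / α - (1 - α) / (2 * α) * (2 * α + 1)) * seqTheta α (k + 1) +
          (1 - α) / (2 * α) * (3 - ((k : ℝ) + 2)) * seqTheta α k)) = _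
  field_simp
  ring

lemma theta_rec1 (hα : α ∈ Set.Ioo (0:ℝ) 1) :
    (α+1) * seqTheta α 1 = -((1-α)*(2*α+1)) * seqTheta α 0 := by
  obtain ⟨h0, h1⟩ := hα
  have ha1 : α + 1 ≠ 0 := by nlinarith
  show (α+1) * ((α - 1) * (2 * α + 1) / (α + 1) * seqTheta α 0) = _
  field_simp
  ring

lemma theta0_pos (hα : α ∈ Set.Ioo (0:ℝ) 1) : 0 < seqTheta α 0 := by
  obtain ⟨h0, h1⟩ := hα
  have : (0:ℝ) < (α+1)/(2*α) := by positivity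
  exact Real.rpow_pos_of_pos this α

lemma omega_theta_zero (hα : α ∈ Set.Ioo (0:ℝ) 1) : sftrW α 0 * seqTheta α 0 = 1 := by
  obtain ⟨h0, h1⟩ := hα
  show (2 * α / (α + 1)) ^ α * ((α + 1) / (2 * α)) ^ α = 1
  rw [← Real.mul_rpow (by positivity) (by positivity)]
  rw [show 2 * α / (α + 1) * ((α + 1) / (2 * α)) = 1 by field_simp]
  exact Real.one_rpow α

noncomputable def Qs (α : ℝ) : PowerSeries ℝ :=
  PowerSeries.C (α+1) - PowerSeries.C 2 * PowerSeries.X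
    + PowerSeries.C (1-α) * (PowerSeries.X * PowerSeries.X)

theorem coeff_derivFun (f : PowerSeries ℝ) (n : ℕ) :
    PowerSeries.coeff n f.derivativeFun = PowerSeries.coeff (n + 1) f * (n + 1) :=
  PowerSeries.coeff_derivative f n

theorem constCoeff_derivFun (f : PowerSeries ℝ) :
    PowerSeries.constantCoeff f.derivativeFun = PowerSeries.coeff 1 f * ((0:ℕ) + 1) := by
  rw [← PowerSeries.coeff_zero_eq_constantCoeff_apply]
  exact PowerSeries.coeff_derivative f 0

open PowerSeries in
lemma odeW (hα : α ∈ Set.Ioo (0:ℝ) 1) :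
    Qs α * (PowerSeries.mk (sftrW α)).derivativeFun
      = PowerSeries.C (-(2*α^2)) * PowerSeries.mk (sftrW α) := by
  ext n
  rw [Qs]
  rcases n with _ | n
  · simp only [sub_mul, add_mul, mul_assoc, map_sub, map_add, coeff_C_mul, coeff_succ_X_mul,
      coeff_derivFun, constCoeff_derivFun, coeff_mk, coeff_zero_eq_constantCoeff, map_mul, constantCoeff_X,
      zero_mul, mul_zero]
    have := omega_rec1 hα
    push_cast
    linarith
  · rcases n with _ | n
    · simp only [sub_mul, add_mul, mul_assoc, map_sub, map_add, coeff_C_mul, coeff_succ_X_mul,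
        coeff_derivFun, constCoeff_derivFun, coeff_mk, coeff_zero_eq_constantCoeff, map_mul, constantCoeff_X,
        zero_mul, mul_zero]
      have := omega_rec hα 0
      push_cast at this ⊢
      linarith
    · simp only [sub_mul, add_mul, mul_assoc, map_sub, map_add, coeff_C_mul, coeff_succ_X_mul,
        coeff_derivFun, constCoeff_derivFun, coeff_mk]
      have := omega_rec hα (n+1)
      push_cast at this ⊢
      linarith

open PowerSeries in
lemma odeT (hα : α ∈ Set.Ioo (0:ℝ) 1) :
    Qs α * (PowerSeries.mk (seqTheta α)).derivativeFun
      = (PowerSeries.C (1-α) * PowerSeries.X - PowerSeries.C ((1-α)*(2*α+1)))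
          * PowerSeries.mk (seqTheta α) := by
  ext n
  rw [Qs]
  rcases n with _ | n
  · simp only [sub_mul, add_mul, mul_assoc, map_sub, map_add, coeff_C_mul, coeff_succ_X_mul,
      coeff_derivFun, constCoeff_derivFun, coeff_mk, coeff_zero_eq_constantCoeff, map_mul, constantCoeff_X,
      zero_mul, mul_zero]
    have := theta_rec1 hα
    push_cast
    linarith
  · rcases n with _ | n
    · simp only [sub_mul, add_mul, mul_assoc, map_sub, map_add, coeff_C_mul, coeff_succ_X_mul,
        coeff_derivFun, constCoeff_derivFun, coeff_mk, coeff_zero_eq_constantCoeff, map_mul, constantCoeff_X,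
        zero_mul, mul_zero]
      have := theta_rec hα 0
      push_cast at this ⊢
      linarith
    · simp only [sub_mul, add_mul, mul_assoc, map_sub, map_add, coeff_C_mul, coeff_succ_X_mul,
        coeff_derivFun, constCoeff_derivFun, coeff_mk]
      have := theta_rec hα (n+1)
      push_cast at this ⊢
      linarith

open PowerSeries in
lemma odeP (hα : α ∈ Set.Ioo (0:ℝ) 1) :
    Qs α * (PowerSeries.mk (sftrW α) * PowerSeries.mk (seqTheta α)).derivativeFun
      = (PowerSeries.C (1-α) * PowerSeries.X - PowerSeries.C (α+1))
          * (PowerSeries.mk (sftrW α) * PowerSeries.mk (seqTheta α)) := by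
  rw [derivativeFun_mul, smul_eq_mul, smul_eq_mul]
  have e1 : Qs α * (PowerSeries.mk (sftrW α) * (PowerSeries.mk (seqTheta α)).derivativeFun
      + PowerSeries.mk (seqTheta α) * (PowerSeries.mk (sftrW α)).derivativeFun)
      = PowerSeries.mk (sftrW α) * (Qs α * (PowerSeries.mk (seqTheta α)).derivativeFun)
        + PowerSeries.mk (seqTheta α) * (Qs α * (PowerSeries.mk (sftrW α)).derivativeFun) := by
    ring
  rw [e1, odeW hα, odeT hα]
  have e2 : PowerSeries.C (α+1)
      = PowerSeries.C ((1-α)*(2*α+1)) + PowerSeries.C (2*α^2) := by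
    rw [← map_add]; congr 1; ring
  have e3 : PowerSeries.C (-(2*α^2)) = -PowerSeries.C (2*α^2) := by
    rw [← map_neg]
  rw [e2, e3]
  ring

open PowerSeries in
lemma mulWT (hα : α ∈ Set.Ioo (0:ℝ) 1) :
    PowerSeries.mk (sftrW α) * PowerSeries.mk (seqTheta α) = 1 - PowerSeries.X := by
  have ha1 : α + 1 ≠ 0 := by have := hα.1; positivity
  set P := PowerSeries.mk (sftrW α) * PowerSeries.mk (seqTheta α) with hPdef
  set p : ℕ → ℝ := fun n => coeff n P with hp
  have hP := odeP hα
  rw [← hPdef] at hP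
  have p0 : p 0 = 1 := by
    simp only [hp, hPdef, coeff_zero_eq_constantCoeff, map_mul, constantCoeff_mk]
    exact omega_theta_zero hα
  -- coefficient equations
  have c0 : (α+1) * p 1 = -((α+1) * p 0) := by
    have := congrArg (coeff 0) hP
    rw [Qs] at this
    simp only [sub_mul, add_mul, mul_assoc, map_sub, map_add, coeff_C_mul, coeff_succ_X_mul,
      coeff_derivFun, constCoeff_derivFun, coeff_zero_eq_constantCoeff, map_mul, constantCoeff_X,
      zero_mul, mul_zero] at this
    push_cast at this
    rw [← PowerSeries.coeff_zero_eq_constantCoeff] at this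
    rw [hp]
    dsimp only
    linarith
  have c1 : (α+1) * (2 * p 2) - 2 * p 1 = (1-α) * p 0 - (α+1) * p 1 := by
    have := congrArg (coeff 1) hP
    rw [Qs] at this
    simp only [sub_mul, add_mul, mul_assoc, map_sub, map_add, coeff_C_mul, coeff_succ_X_mul,
      coeff_derivFun, constCoeff_derivFun, coeff_zero_eq_constantCoeff, map_mul, constantCoeff_X,
      zero_mul, mul_zero] at this
    push_cast at this
    rw [← PowerSeries.coeff_zero_eq_constantCoeff] at this
    rw [hp]
    dsimp only
    linarith
  have crec : ∀ n : ℕ, (α+1) * (((n:ℝ)+3) * p (n+3))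
      = (2*((n:ℝ)+2) - (α+1)) * p (n+2) - (1-α) * ((n:ℝ)+1) * p (n+1) + (1-α) * p (n+1) := by
    intro n
    have := congrArg (coeff (n+2)) hP
    rw [Qs] at this
    simp only [sub_mul, add_mul, mul_assoc, map_sub, map_add, coeff_C_mul, coeff_succ_X_mul,
      coeff_derivFun, constCoeff_derivFun, coeff_mk] at this
    push_cast at this
    rw [hp]
    dsimp only
    linarith
  have p1 : p 1 = -1 := by
    rw [p0] at c0
    have : (α+1) * p 1 = (α+1) * (-1) := by linarith
    exact mul_left_cancel₀ ha1 this
  have p2 : p 2 = 0 := by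
    rw [p0, p1] at c1
    have h2 : (α + 1) * (2 * p 2) = 0 := by linarith
    rcases mul_eq_zero.mp h2 with h | h
    · exact absurd h ha1
    · linarith
  have pz : ∀ n : ℕ, p (n+2) = 0 ∧ p (n+3) = 0 := by
    intro n
    induction n with
    | zero =>
      refine ⟨p2, ?_⟩
      have h := crec 0
      rw [p1, p2] at h
      push_cast at h
      have h3 : (α+1) * (3 * p 3) = 0 := by linarith
      rcases mul_eq_zero.mp h3 with h' | h'
      · exact absurd h' ha1
      · linarith
    | succ k ih =>
      refine ⟨ih.2, ?_⟩
      have h := crec (k+1)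
      rw [show k+1+3 = k+4 from rfl, show k+1+2 = k+3 from rfl, show k+1+1 = k+2 from rfl] at h
      rw [ih.1, ih.2] at h
      push_cast at h
      have h4 : (α+1) * ((((k:ℕ):ℝ)+1+3) * p (k+4)) = 0 := by linarith
      rcases mul_eq_zero.mp h4 with h' | h'
      · exact absurd h' ha1
      · rcases mul_eq_zero.mp h' with h'' | h''
        · exfalso
          have : (((k:ℕ):ℝ)+1+3) ≠ 0 := by positivity
          exact this h''
        · exact h''
  ext n
  rcases n with _ | n
  · show p 0 = _
    rw [p0]
    simp
  · rcases n with _ | n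
    · show p 1 = _
      rw [p1]
      simp [PowerSeries.coeff_X, PowerSeries.coeff_one]
    · show p (n+2) = _
      rw [(pz n).1]
      rw [map_sub]
      simp [PowerSeries.coeff_X, PowerSeries.coeff_one]

lemma mul_nonpos_cancel {a b : ℝ} (ha : 0 < a) (h : a * b ≤ 0) : b ≤ 0 := by
  by_contra h'
  push_neg at h'
  nlinarith [mul_pos ha h']

lemma mul_nonneg_cancel {a b : ℝ} (ha : 0 < a) (h : 0 ≤ a * b) : 0 ≤ b := by
  by_contra h'
  push_neg at h'
  nlinarith [mul_neg_of_pos_of_neg ha h']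

lemma theta1_nonpos (hα : α ∈ Set.Ioo (0:ℝ) 1) : seqTheta α 1 ≤ 0 := by
  obtain ⟨h0, h1⟩ := hα
  have hr := theta_rec1 ⟨h0, h1⟩
  have ht0 := theta0_pos ⟨h0, h1⟩
  refine mul_nonpos_cancel (show (0:ℝ) < α+1 by linarith) ?_
  rw [hr]
  have : (0:ℝ) ≤ (1-α) * (2*α+1) * seqTheta α 0 :=
    mul_nonneg (mul_nonneg (by linarith) (by linarith)) ht0.le
  linarith

lemma theta2_nonpos (hα : α ∈ Set.Ioo (0:ℝ) 1) : seqTheta α 2 ≤ 0 := by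
  obtain ⟨h0, h1⟩ := hα
  have hr := theta_rec ⟨h0, h1⟩ 0
  have hr1 := theta_rec1 ⟨h0, h1⟩
  have ht0 := theta0_pos ⟨h0, h1⟩
  push_cast at hr
  have key : ((α+1)^2 * 2) * seqTheta α 2 = -(4*α^3*(1-α)) * seqTheta α 0 := by
    linear_combination (α+1) * hr + (2 - (1-α)*(2*α+1)) * hr1
  refine mul_nonpos_cancel (show (0:ℝ) < (α+1)^2*2 by positivity) ?_
  rw [key]
  have : (0:ℝ) ≤ 4*α^3*(1-α) * seqTheta α 0 := by
    have h3 : (0:ℝ) ≤ 4*α^3*(1-α) := by nlinarith [pow_pos h0 3]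
    exact mul_nonneg h3 ht0.le
  linarith

lemma theta_invariant (hα : α ∈ Set.Ioo (0:ℝ) 1) : ∀ m : ℕ,
    seqTheta α (m+2) ≤ 0 ∧ ((m:ℝ)+2) * seqTheta α (m+2) ≤ (m:ℝ) * seqTheta α (m+1) := by
  obtain ⟨h0, h1⟩ := hα
  intro m
  induction m with
  | zero =>
    refine ⟨theta2_nonpos ⟨h0, h1⟩, ?_⟩
    have := theta2_nonpos ⟨h0, h1⟩
    push_cast
    nlinarith
  | succ k ih =>
    obtain ⟨ih1, ih2⟩ := ih
    have hr := theta_rec ⟨h0, h1⟩ (k+1)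
    push_cast at hr ⊢
    have hmul := mul_le_mul_of_nonneg_left ih2 (show (0:ℝ) ≤ 1-α by linarith)
    have hb : (α+1) * (((k:ℝ)+3) * seqTheta α (k+3))
        ≤ ((1+α)*((k:ℝ)+2) - (1-α)*(2*α+1)) * seqTheta α (k+2) := by
      nlinarith [hr, hmul]
    have h2a : 2*α^2 * seqTheta α (k+2) ≤ 0 :=
      mul_nonpos_of_nonneg_of_nonpos (by positivity) ih1
    have hc : (α+1) * (((k:ℝ)+3) * seqTheta α (k+3))
        ≤ (α+1) * (((k:ℝ)+1) * seqTheta α (k+2)) := by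
      nlinarith [hb, h2a]
    have hinv : ((k:ℝ)+3) * seqTheta α (k+3) ≤ ((k:ℝ)+1) * seqTheta α (k+2) :=
      le_of_mul_le_mul_left hc (by linarith)
    have hnn : ((k:ℝ)+1) * seqTheta α (k+2) ≤ 0 :=
      mul_nonpos_of_nonneg_of_nonpos (by positivity) ih1
    refine ⟨mul_nonpos_cancel (show (0:ℝ) < (k:ℝ)+3 by positivity) (by linarith), ?_⟩
    convert hinv using 2 <;> push_cast <;> ring

lemma theta_nonpos (hα : α ∈ Set.Ioo (0:ℝ) 1) (m : ℕ) (hm : 1 ≤ m) : seqTheta α m ≤ 0 := by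
  rcases m with _ | m
  · omega
  · rcases m with _ | m
    · exact theta1_nonpos hα
    · exact (theta_invariant hα m).1

lemma varTheta_succ (m : ℕ) : varTheta α (m+1) = varTheta α m + seqTheta α (m+1) :=
  Finset.sum_range_succ _ _

lemma varTheta_zero : varTheta α 0 = seqTheta α 0 := by
  simp [varTheta]

lemma varTheta_rec (hα : α ∈ Set.Ioo (0:ℝ) 1) : ∀ m : ℕ,
    (1+α) * (((m:ℝ)+2) * varTheta α (m+2))
      = (2*((m:ℝ)+1) + 2*α^2) * varTheta α (m+1) - (1-α) * (m:ℝ) * varTheta α m := by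
  intro m
  induction m with
  | zero =>
    have hr := theta_rec hα 0
    have hr1 := theta_rec1 hα
    push_cast at hr ⊢
    rw [varTheta_succ, varTheta_succ, varTheta_zero]
    linear_combination hr + hr1
  | succ k ih =>
    have hr := theta_rec hα (k+1)
    push_cast at hr ⊢
    rw [varTheta_succ (k+2), varTheta_succ (k+1), varTheta_succ k] at *
    linear_combination ih + hr

lemma varTheta_invariant (hα : α ∈ Set.Ioo (0:ℝ) 1) : ∀ k : ℕ,
    0 ≤ varTheta α (k+1) ∧ 0 ≤ varTheta α (k+2) ∧
      ((k:ℝ)+1+α) * varTheta α (k+1) ≤ ((k:ℝ)+2) * varTheta α (k+2) := by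
  obtain ⟨h0, h1⟩ := hα
  have ht0 := theta0_pos ⟨h0, h1⟩
  have hv1 : (α+1) * varTheta α 1 = 2*α^2 * seqTheta α 0 := by
    rw [varTheta_succ, varTheta_zero]
    linear_combination theta_rec1 ⟨h0, h1⟩
  have hv1' : 0 ≤ varTheta α 1 := by
    refine mul_nonneg_cancel (show (0:ℝ) < α+1 by linarith) ?_
    rw [hv1]; positivity
  intro k
  induction k with
  | zero =>
    have hr := varTheta_rec ⟨h0, h1⟩ 0
    push_cast at hr
    -- (1+α)*(2*ϑ2) = (2+2α²)*ϑ1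
    have hv2 : 0 ≤ varTheta α 2 := by
      refine mul_nonneg_cancel (show (0:ℝ) < (1+α)*2 by linarith) ?_
      have : (0:ℝ) ≤ (2+2*α^2) * varTheta α 1 := by positivity
      nlinarith
    refine ⟨hv1', hv2, ?_⟩
    push_cast
    refine le_of_mul_le_mul_left ?_ (show (0:ℝ) < 1+α by linarith)
    have hq : (0:ℝ) ≤ (1-α)^2 * varTheta α 1 := by positivity
    nlinarith
  | succ k ih =>
    obtain ⟨ih1, ih2, ih3⟩ := ih
    have hr := varTheta_rec ⟨h0, h1⟩ (k+1)
    push_cast at hr ⊢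
    -- (1+α)*((k+3)*ϑ(k+3)) = (2(k+2)+2α²)ϑ(k+2) - (1-α)(k+1)ϑ(k+1)
    have hmul := mul_le_mul_of_nonneg_left ih3
      (show (0:ℝ) ≤ (1-α)*((k:ℝ)+1) by
        have : (0:ℝ) ≤ 1-α := by linarith
        positivity)
    -- (1-α)(k+1)(k+1+α)ϑ(k+1) ≤ (1-α)(k+1)(k+2)ϑ(k+2)
    have hkey : (1+α) * (((k:ℝ)+1+α) * (((k:ℝ)+3) * varTheta α (k+3)))
        ≥ (1+α) * (((k:ℝ)+1+α) * (((k:ℝ)+2+α) * varTheta α (k+2))) := by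
      have hexp : (1+α) * (((k:ℝ)+1+α) * (((k:ℝ)+3) * varTheta α (k+3)))
          = ((k:ℝ)+1+α) * ((2*((k:ℝ)+2)+2*α^2) * varTheta α (k+2))
            - ((k:ℝ)+1+α) * ((1-α)*((k:ℝ)+1) * varTheta α (k+1)) := by
        linear_combination ((k:ℝ)+1+α) * hr
      rw [hexp]
      have hgap : ((k:ℝ)+1+α) * ((2*((k:ℝ)+2)+2*α^2) * varTheta α (k+2))
            - (1-α)*((k:ℝ)+1) * (((k:ℝ)+2) * varTheta α (k+2))
          ≥ (1+α) * (((k:ℝ)+1+α) * (((k:ℝ)+2+α) * varTheta α (k+2))) := by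
        have hc : ((k:ℝ)+1+α) * (2*((k:ℝ)+2)+2*α^2)
              - (1-α)*((k:ℝ)+1) * ((k:ℝ)+2) - (1+α) * (((k:ℝ)+1+α) * ((k:ℝ)+2+α))
            = α*(1-α)^2 := by ring
        nlinarith [ih2, mul_nonneg (mul_nonneg (show (0:ℝ) ≤ α by linarith)
          (sq_nonneg (1-α))) ih2]
      nlinarith [hmul, hgap]
    have hpos : (0:ℝ) < (1+α) * (((k:ℝ)+1+α)) := by positivity
    have hge : ((k:ℝ)+2+α) * varTheta α (k+2) ≤ ((k:ℝ)+3) * varTheta α (k+3) := by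
      have := le_of_mul_le_mul_left (by nlinarith [hkey] :
        ((1+α) * (((k:ℝ)+1+α))) * (((k:ℝ)+2+α) * varTheta α (k+2))
          ≤ ((1+α) * (((k:ℝ)+1+α))) * (((k:ℝ)+3) * varTheta α (k+3))) hpos
      exact this
    have hv3 : 0 ≤ varTheta α (k+3) := by
      refine mul_nonneg_cancel (show (0:ℝ) < (k:ℝ)+3 by positivity) ?_
      have : (0:ℝ) ≤ ((k:ℝ)+2+α) * varTheta α (k+2) := by positivity
      linarith
    exact ⟨ih2, hv3, by convert hge using 2 <;> push_cast <;> ring⟩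

lemma varTheta_nonneg (hα : α ∈ Set.Ioo (0:ℝ) 1) (m : ℕ) : 0 ≤ varTheta α m := by
  rcases m with _ | m
  · rw [varTheta_zero]; exact (theta0_pos hα).le
  · rcases m with _ | m
    · exact (varTheta_invariant hα 0).1
    · exact (varTheta_invariant hα m).2.1

lemma matD_symm (M : ℕ) (i j : Fin M) : matD M i j = matD M j i := by
  unfold matD
  exact if_congr eq_comm rfl (if_congr or_comm rfl (if_congr or_comm rfl rfl))

lemma lapMat_symm (M : ℕ) (h : ℝ) (p q : Fin M × Fin M) :
    lapMat M h p q = lapMat M h q p := by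
  simp only [lapMat, Matrix.smul_apply, Matrix.add_apply, Matrix.kroneckerMap_apply,
    Matrix.one_apply]
  rw [matD_symm M p.2 q.2, matD_symm M p.1 q.1]
  have e1 : (if p.1 = q.1 then (1:ℝ) else 0) = (if q.1 = p.1 then (1:ℝ) else 0) :=
    if_congr eq_comm rfl rfl
  have e2 : (if p.2 = q.2 then (1:ℝ) else 0) = (if q.2 = p.2 then (1:ℝ) else 0) :=
    if_congr eq_comm rfl rfl
  rw [e1, e2]

lemma sum_mulVec_symm {M : ℕ} (h : ℝ) (u v : Fin M × Fin M → ℝ) :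
    ∑ i, (lapMat M h).mulVec u i * v i = ∑ i, u i * (lapMat M h).mulVec v i := by
  simp only [Matrix.mulVec, dotProduct, Finset.sum_mul, Finset.mul_sum]
  rw [Finset.sum_comm]
  refine Finset.sum_congr rfl fun i _ => Finset.sum_congr rfl fun j _ => ?_
  rw [lapMat_symm]
  ring

lemma ipd_nonneg {M : ℕ} {h : ℝ} (w : Fin M × Fin M → ℝ) : 0 ≤ ipd h w w := by
  unfold ipd
  have : 0 ≤ ∑ i, w i * w i := Finset.sum_nonneg fun i _ => mul_self_nonneg _
  positivity

lemma ipd_sub_expand {M : ℕ} (h : ℝ) (x y : Fin M × Fin M → ℝ) :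
    ipd h (x - y) (x - y) = ipd h x x - 2 * ipd h x y + ipd h y y := by
  unfold ipd
  have h1 : ∑ i, (x-y) i * (x-y) i
      = (∑ i, x i * x i) - 2 * (∑ i, x i * y i) + ∑ i, y i * y i := by
    rw [Finset.mul_sum, ← Finset.sum_sub_distrib, ← Finset.sum_add_distrib]
    exact Finset.sum_congr rfl fun i _ => by simp only [Pi.sub_apply]; ring
  rw [h1]
  ring

lemma energy_ineq {M : ℕ} (ε h : ℝ) (a b : Fin M × Fin M → ℝ) :
    (ε^2/2 * ipd h (-(lapMat M h).mulVec a) a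
        + 1/4 * ipd h (fun i => a i^2 - 1) (fun i => a i^2 - 1))
      - (ε^2/2 * ipd h (-(lapMat M h).mulVec b) b
        + 1/4 * ipd h (fun i => b i^2 - 1) (fun i => b i^2 - 1))
    ≤ - ipd h (ε^2 • (lapMat M h).mulVec ((1/2:ℝ) • (a + b)) - fnl b a) (a - b) := by
  unfold ipd
  rw [Matrix.mulVec_smul, Matrix.mulVec_add]
  have hc : ∑ i, (lapMat M h).mulVec b i * a i = ∑ i, (lapMat M h).mulVec a i * b i := by
    rw [sum_mulVec_symm]
    exact Finset.sum_congr rfl fun i _ => mul_comm _ _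
  have hpt : ∑ i, (ε^2 • ((1/2:ℝ) • ((lapMat M h).mulVec a + (lapMat M h).mulVec b))
        - fnl b a) i * (a - b) i
      = ε^2/2 * (∑ i, (lapMat M h).mulVec a i * a i)
        - ε^2/2 * (∑ i, (lapMat M h).mulVec b i * b i)
        + ε^2/2 * (∑ i, (lapMat M h).mulVec b i * a i)
        - ε^2/2 * (∑ i, (lapMat M h).mulVec a i * b i)
        - (1/4) * (∑ i, (a i^2 - 1) * (a i^2 - 1))
        + (1/4) * (∑ i, (b i^2 - 1) * (b i^2 - 1))
        - 1/12 * ∑ i, (a i - b i)^4 := by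
    simp only [Finset.mul_sum, ← Finset.sum_sub_distrib, ← Finset.sum_add_distrib]
    refine Finset.sum_congr rfl fun i _ => ?_
    simp only [Pi.sub_apply, Pi.smul_apply, Pi.add_apply, fnl, smul_eq_mul]
    ring
  have hna : ∑ i, (-(lapMat M h).mulVec a) i * a i
      = -∑ i, (lapMat M h).mulVec a i * a i := by
    simp [neg_mul]
  have hnb : ∑ i, (-(lapMat M h).mulVec b) i * b i
      = -∑ i, (lapMat M h).mulVec b i * b i := by
    simp [neg_mul]
  rw [hpt, hc, hna, hnb]
  have hq : 0 ≤ h^2 * ∑ i, (a i - b i)^4 := by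
    have : 0 ≤ ∑ i, (a i - b i)^4 :=
      Finset.sum_nonneg fun i _ => by positivity
    positivity
  nlinarith [hq]

open PowerSeries in
lemma inversion {α ε τ h : ℝ} {M : ℕ} (hα : α ∈ Set.Ioo (0:ℝ) 1) (hτ : 0 < τ)
    (U : ℕ → (Fin M × Fin M → ℝ)) (hU : solvesScheme α ε τ h M U) (n' : ℕ)
    (i : Fin M × Fin M) :
    U (n'+1) i - U n' i
      = τ^α * ∑ j ∈ Finset.range (n'+1), seqTheta α (n' - j) * Vhalf ε h M U (j+1) i := by
  have hτα : (0:ℝ) < τ ^ α := Real.rpow_pos_of_pos hτ α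
  set g : ℕ → ℝ := fun k => U k i - U 0 i with hg
  set b : ℕ → ℝ := fun s => if s = 0 then 0 else τ^α * Vhalf ε h M U s i with hb
  have hWA : PowerSeries.mk (sftrW α) * PowerSeries.mk g = PowerSeries.mk b := by
    ext s
    rw [coeff_mul, Finset.Nat.sum_antidiagonal_eq_sum_range_succ_mk]
    simp only [coeff_mk]
    rcases Nat.eq_zero_or_pos s with hs | hs
    · subst hs
      simp [hg, hb]
    · have hscheme := hU s hs
      have hcomp := congrFun hscheme i
      simp only [Pi.smul_apply, Finset.sum_apply, Pi.sub_apply, smul_eq_mul] at hcomp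
      have hV : ε ^ 2 * (lapMat M h).mulVec ((1 / 2 : ℝ) • (U s + U (s - 1))) i
          - fnl (U (s - 1)) (U s) i = Vhalf ε h M U s i := by
        simp [Vhalf]
      rw [hV] at hcomp
      have hinv : τ ^ (-α) = (τ^α)⁻¹ := Real.rpow_neg hτ.le α
      rw [hinv] at hcomp
      have : ∑ k ∈ Finset.range (s+1), sftrW α k * g (s-k)
          = τ^α * Vhalf ε h M U s i := by
        rw [← hcomp]
        field_simp
        rfl
      rw [this]
      simp only [hb]
      rw [if_neg (by omega : ¬ s = 0)]
  have hTB : PowerSeries.mk (seqTheta α) * PowerSeries.mk b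
      = (1 - PowerSeries.X) * PowerSeries.mk g := by
    rw [← hWA, ← mul_assoc, mul_comm (PowerSeries.mk (seqTheta α)) (PowerSeries.mk (sftrW α)),
      mulWT hα]
  have hcoeff := congrArg (coeff (n'+1)) hTB
  rw [coeff_mul, Finset.Nat.sum_antidiagonal_eq_sum_range_succ_mk] at hcoeff
  simp only [coeff_mk, sub_mul, one_mul, map_sub, coeff_succ_X_mul] at hcoeff
  -- LHS: ∑ k in range (n'+2), θ k * b (n'+1-k)
  have hrefl : ∑ k ∈ Finset.range (n'+2), seqTheta α k * b (n'+1-k)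
      = ∑ j ∈ Finset.range (n'+2), seqTheta α (n'+1-j) * b j := by
    rw [← Finset.sum_range_reflect]
    refine Finset.sum_congr rfl fun j hj => ?_
    have hj' : j ≤ n'+1 := by have := Finset.mem_range.mp hj; omega
    congr 2
    all_goals omega
  have hpeel : ∑ j ∈ Finset.range (n'+2), seqTheta α (n'+1-j) * b j
      = ∑ j ∈ Finset.range (n'+1), seqTheta α (n'+1-(j+1)) * b (j+1) := by
    rw [Finset.sum_range_succ' (fun j => seqTheta α (n'+1-j) * b j) (n'+1)]
    have hb0 : b 0 = 0 := by simp [hb]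
    rw [hb0]
    simp
  rw [hrefl, hpeel] at hcoeff
  have hbv : ∀ j : ℕ, b (j+1) = τ^α * Vhalf ε h M U (j+1) i := by
    intro j
    simp [hb]
  have : U (n'+1) i - U n' i = ∑ j ∈ Finset.range (n'+1),
      seqTheta α (n' - j) * (τ^α * Vhalf ε h M U (j+1) i) := by
    have hgg : g (n'+1) - g n' = U (n'+1) i - U n' i := by simp [hg]
    rw [← hgg, ← hcoeff]
    refine Finset.sum_congr rfl fun j hj => ?_
    have hj' : j ≤ n' := by have := Finset.mem_range.mp hj; omega
    rw [hbv]
    congr 2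
    omega
  rw [this, Finset.mul_sum]
  exact Finset.sum_congr rfl fun j _ => by ring

lemma ipd_comm {M : ℕ} (h : ℝ) (u v : Fin M × Fin M → ℝ) : ipd h u v = ipd h v u := by
  unfold ipd
  congr 1
  exact Finset.sum_congr rfl fun i _ => mul_comm _ _

lemma discE_step {M : ℕ} (ε τ h : ℝ) (U : ℕ → (Fin M × Fin M → ℝ)) (n' : ℕ) :
    discE ε h M U (n'+1) - discE ε h M U n'
      ≤ - ipd h (Vhalf ε h M U (n'+1)) (U (n'+1) - U n') := by
  unfold discE Vhalf
  exact energy_ineq ε h (U (n'+1)) (U n')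

lemma compE_eq (α ε τ h : ℝ) (M : ℕ) (U : ℕ → (Fin M × Fin M → ℝ)) (m : ℕ) :
    compE α ε τ h M U m = discE ε h M U m
      + τ^α/2 * ∑ j ∈ Finset.range m, varTheta α (m-(j+1))
          * ipd h (Vhalf ε h M U (j+1)) (Vhalf ε h M U (j+1)) := by
  rcases m with _ | m
  · simp [compE]
  · rw [compE, if_neg (by omega : ¬ m + 1 = 0)]
    congr 1
    congr 1
    rw [← Finset.Ico_add_one_right_eq_Icc, Finset.sum_Ico_eq_sum_range]
    refine Finset.sum_congr (by congr 1) fun j _ => ?_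
    have e : 1 + j = j + 1 := by omega
    rw [e]

end Aux

theorem discrete_energy_decay (α ε τ h : ℝ) (M : ℕ)
    (hα : α ∈ Set.Ioo (0 : ℝ) 1) (hε : 0 < ε) (hτ : 0 < τ) (hh : 0 < h) (hM : 2 ≤ M)
    (U : ℕ → (Fin M × Fin M → ℝ)) (hU : solvesScheme α ε τ h M U) :
    ∀ n : ℕ, 1 ≤ n →
      compE α ε τ h M U n - compE α ε τ h M U (n - 1) +
          τ ^ α / 2 * varTheta α (n - 1) * ipd h (Vhalf ε h M U n) (Vhalf ε h M U n) ≤ 0 ∧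
      compE α ε τ h M U n ≤ compE α ε τ h M U (n - 1) := by
  intro n hn
  obtain ⟨n', rfl⟩ : ∃ m, n = m + 1 := ⟨n - 1, by omega⟩
  have hsub : n' + 1 - 1 = n' := rfl
  rw [hsub]
  have hT : (0:ℝ) < τ ^ α := Real.rpow_pos_of_pos hτ α
  -- energy decrease step
  have hE := discE_step (M := M) ε τ h U n'
  -- inversion expressed through inner products
  have hInvE : ipd h (Vhalf ε h M U (n'+1)) (U (n'+1) - U n')
      = τ^α * ∑ j ∈ Finset.range (n'+1), seqTheta α (n'-j)
          * ipd h (Vhalf ε h M U (n'+1)) (Vhalf ε h M U (j+1)) := by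
    unfold ipd
    have h1 : ∀ i, Vhalf ε h M U (n'+1) i * (U (n'+1) - U n') i
        = ∑ j ∈ Finset.range (n'+1), seqTheta α (n'-j)
            * (τ^α * (Vhalf ε h M U (n'+1) i * Vhalf ε h M U (j+1) i)) := by
      intro i
      rw [Pi.sub_apply, inversion hα hτ U hU n' i]
      simp only [Finset.mul_sum]
      exact Finset.sum_congr rfl fun j _ => by ring
    rw [show (∑ i, Vhalf ε h M U (n'+1) i * (U (n'+1) - U n') i)
        = ∑ i, ∑ j ∈ Finset.range (n'+1), seqTheta α (n'-j)
            * (τ^α * (Vhalf ε h M U (n'+1) i * Vhalf ε h M U (j+1) i))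
      from Finset.sum_congr rfl fun i _ => h1 i]
    simp only [Finset.mul_sum]
    rw [Finset.sum_comm]
    exact Finset.sum_congr rfl fun j _ => Finset.sum_congr rfl fun i _ => by ring
  have hpeel2 : ∑ j ∈ Finset.range (n'+1), seqTheta α (n'-j)
        * ipd h (Vhalf ε h M U (n'+1)) (Vhalf ε h M U (j+1))
      = (∑ j ∈ Finset.range n', seqTheta α (n'-j)
          * ipd h (Vhalf ε h M U (n'+1)) (Vhalf ε h M U (j+1)))
        + seqTheta α 0 * ipd h (Vhalf ε h M U (n'+1)) (Vhalf ε h M U (n'+1)) := by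
    rw [Finset.sum_range_succ, Nat.sub_self]
  rw [hInvE, hpeel2] at hE
  -- rewrite the compatible energies
  rw [compE_eq α ε τ h M U (n'+1), compE_eq α ε τ h M U n']
  have hSig : ∑ j ∈ Finset.range (n'+1), varTheta α (n'+1-(j+1))
        * ipd h (Vhalf ε h M U (j+1)) (Vhalf ε h M U (j+1))
      = ((∑ j ∈ Finset.range n', varTheta α (n'-(j+1))
          * ipd h (Vhalf ε h M U (j+1)) (Vhalf ε h M U (j+1)))
        + ∑ j ∈ Finset.range n', seqTheta α (n'-j)
          * ipd h (Vhalf ε h M U (j+1)) (Vhalf ε h M U (j+1)))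
        + seqTheta α 0 * ipd h (Vhalf ε h M U (n'+1)) (Vhalf ε h M U (n'+1)) := by
    rw [Finset.sum_range_succ]
    have hlast : varTheta α (n'+1-(n'+1)) = seqTheta α 0 := by
      rw [Nat.sub_self, varTheta_zero]
    rw [hlast]
    congr 1
    rw [← Finset.sum_add_distrib]
    refine Finset.sum_congr rfl fun j hj => ?_
    have hj' := Finset.mem_range.mp hj
    have hidx : n'+1-(j+1) = (n'-(j+1))+1 := by omega
    rw [hidx, varTheta_succ]
    have hidx2 : n'-(j+1)+1 = n'-j := by omega
    rw [hidx2]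
    ring
  rw [hSig]
  -- abbreviations
  set E1 := discE ε h M U (n'+1) with hE1
  set E0 := discE ε h M U n' with hE0
  set C := ipd h (Vhalf ε h M U (n'+1)) (Vhalf ε h M U (n'+1)) with hCdef
  set A := ∑ j ∈ Finset.range n', seqTheta α (n'-j)
      * ipd h (Vhalf ε h M U (n'+1)) (Vhalf ε h M U (j+1)) with hAdef
  set B := ∑ j ∈ Finset.range n', seqTheta α (n'-j)
      * ipd h (Vhalf ε h M U (j+1)) (Vhalf ε h M U (j+1)) with hBdef
  set S0 := ∑ j ∈ Finset.range n', varTheta α (n'-(j+1))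
      * ipd h (Vhalf ε h M U (j+1)) (Vhalf ε h M U (j+1)) with hS0def
  -- the quadratic-form bound
  have hsum3 : ∑ j ∈ Finset.range n', seqTheta α (n'-j)
      = varTheta α n' - seqTheta α 0 := by
    have hϑ : varTheta α n' = ∑ s ∈ Finset.range (n'+1), seqTheta α s := rfl
    rw [hϑ, Finset.sum_range_succ' (seqTheta α) n']
    have hre : ∑ j ∈ Finset.range n', seqTheta α (n'-j)
        = ∑ j ∈ Finset.range n', seqTheta α (j+1) := by
      rw [← Finset.sum_range_reflect (fun j => seqTheta α (j+1)) n']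
      refine Finset.sum_congr rfl fun j hj => ?_
      have hj' := Finset.mem_range.mp hj
      congr 1
      omega
    rw [hre]
    ring
  have hterm : ∀ j ∈ Finset.range n', seqTheta α (n'-j)
        * (ipd h (Vhalf ε h M U (j+1)) (Vhalf ε h M U (j+1)) / 2
            - ipd h (Vhalf ε h M U (n'+1)) (Vhalf ε h M U (j+1)))
      ≤ seqTheta α (n'-j) * (-(C/2)) := by
    intro j hj
    have hj' := Finset.mem_range.mp hj
    have hθ : seqTheta α (n'-j) ≤ 0 := theta_nonpos hα _ (by omega)
    refine mul_le_mul_of_nonpos_left ?_ hθ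
    have hexp := ipd_sub_expand h (Vhalf ε h M U (j+1)) (Vhalf ε h M U (n'+1))
    have hnn := ipd_nonneg (h := h) (Vhalf ε h M U (j+1) - Vhalf ε h M U (n'+1))
    have hcm : ipd h (Vhalf ε h M U (j+1)) (Vhalf ε h M U (n'+1))
        = ipd h (Vhalf ε h M U (n'+1)) (Vhalf ε h M U (j+1)) := ipd_comm h _ _
    rw [hexp, hcm] at hnn
    rw [hCdef]
    linarith
  have hsum_le : B/2 - A ≤ (varTheta α n' - seqTheta α 0) * (-(C/2)) := by
    have hL : B/2 - A = ∑ j ∈ Finset.range n', seqTheta α (n'-j)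
        * (ipd h (Vhalf ε h M U (j+1)) (Vhalf ε h M U (j+1)) / 2
            - ipd h (Vhalf ε h M U (n'+1)) (Vhalf ε h M U (j+1))) := by
      rw [hBdef, hAdef, Finset.sum_div, ← Finset.sum_sub_distrib]
      exact Finset.sum_congr rfl fun j _ => by ring
    rw [hL, ← hsum3, Finset.sum_mul]
    exact Finset.sum_le_sum hterm
  have h1 : E1 - E0 + τ^α * (A + seqTheta α 0 * C) ≤ 0 := by linarith [hE]
  have hD : B/2 - A - seqTheta α 0 * C/2 + varTheta α n' * C/2 ≤ 0 := by nlinarith [hsum_le]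
  have hTD : τ^α * (B/2 - A - seqTheta α 0 * C/2 + varTheta α n' * C/2) ≤ 0 :=
    mul_nonpos_of_nonneg_of_nonpos hT.le hD
  have hCnn : 0 ≤ C := ipd_nonneg _
  have hϑnn : 0 ≤ varTheta α n' := varTheta_nonneg hα n'
  have hnonneg : 0 ≤ τ^α/2 * varTheta α n' * C :=
    mul_nonneg (mul_nonneg (by positivity) hϑnn) hCnn
  have heq1 : E1 + τ^α/2 * ((S0 + B) + seqTheta α 0 * C) - (E0 + τ^α/2 * S0)
        + τ^α/2 * varTheta α n' * C
      = (E1 - E0 + τ^α * (A + seqTheta α 0 * C))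
        + τ^α * (B/2 - A - seqTheta α 0 * C/2 + varTheta α n' * C/2) := by ring
  constructor
  · linarith [h1, hTD, heq1]
  · linarith [h1, hTD, heq1, hnonneg]
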